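/- The map Φ_p with p = (1, 1, −1), i.e. Φ(X) = Φ₁(X) + Φ₂(X) − Φ₃(X) where Φₖ(X) = ½(σₖ X σₖ + X), is unital and positive, but it does not satisfy the Kadison–Schwarz inequality: for X = E₁₂ one has Φ(Xᴴ X) = E₁₁ and Φ(Xᴴ)Φ(X) = E₂₂, so Φ(Xᴴ X) − Φ(Xᴴ)Φ(X) is not positive semidefinite. -/

import Mathlib

open Matrix
open scoped ComplexOrder

/-- The three Pauli matrices in `M₂(ℂ)`. -/
def pauli : Fin 3 → Matrix (Fin 2) (Fin 2) ℂ
  | 0 => !![0, 1; 1, 0]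
  | 1 => !![0, -Complex.I; Complex.I, 0]
  | 2 => !![1, 0; 0, -1]

/-- `Φₖ(X) = ½ (σₖ X σₖ + X)`. -/
noncomputable def PhiK (k : Fin 3) (X : Matrix (Fin 2) (Fin 2) ℂ) :
    Matrix (Fin 2) (Fin 2) ℂ :=
  (1 / 2 : ℂ) • (pauli k * X * pauli k + X)

/-- `Φ = Φ₁ + Φ₂ − Φ₃`, i.e. the map `Φ_p` with `p = (1, 1, −1)`. -/
noncomputable def PhiExample (X : Matrix (Fin 2) (Fin 2) ℂ) :
    Matrix (Fin 2) (Fin 2) ℂ :=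
  PhiK 0 X + PhiK 1 X - PhiK 2 X

lemma phi_eq (A : Matrix (Fin 2) (Fin 2) ℂ) :
    PhiExample A = pauli 0 * Aᵀ * pauli 0 := by
  ext i j
  fin_cases i <;> fin_cases j <;>
    simp [PhiExample, PhiK, pauli, Matrix.mul_apply, Fin.sum_univ_succ,
      Matrix.vecMul, dotProduct, Matrix.vecHead, Matrix.vecTail] <;> ring_nf <;> simp [Complex.I_sq] <;> ring

lemma e01 : (Matrix.single 0 1 1 : Matrix (Fin 2) (Fin 2) ℂ) = !![0,1;0,0] := by
  ext i j; fin_cases i <;> fin_cases j <;> simp [Matrix.single]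

lemma e00 : (Matrix.single 0 0 1 : Matrix (Fin 2) (Fin 2) ℂ) = !![1,0;0,0] := by
  ext i j; fin_cases i <;> fin_cases j <;> simp [Matrix.single]

lemma e11 : (Matrix.single 1 1 1 : Matrix (Fin 2) (Fin 2) ℂ) = !![0,0;0,1] := by
  ext i j; fin_cases i <;> fin_cases j <;> simp [Matrix.single]

/-- `Φ = Φ₁ + Φ₂ − Φ₃` is unital and positive, but for `X = E₁₂`
one has `Φ(Xᴴ X) = E₁₁` and `Φ(Xᴴ)Φ(X) = E₂₂`, and `E₁₁ − E₂₂` is not positive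
semidefinite, so `Φ` violates the Kadison–Schwarz inequality. -/
theorem stmt_8 :
    PhiExample 1 = 1 ∧
    (∀ A : Matrix (Fin 2) (Fin 2) ℂ, A.PosSemidef → (PhiExample A).PosSemidef) ∧
    (PhiExample ((Matrix.single 0 1 1 : Matrix (Fin 2) (Fin 2) ℂ)ᴴ *
        Matrix.single 0 1 1) = Matrix.single 0 0 1) ∧
    (PhiExample ((Matrix.single 0 1 1 : Matrix (Fin 2) (Fin 2) ℂ)ᴴ) *
        PhiExample (Matrix.single 0 1 1) = Matrix.single 1 1 1) ∧
    ¬ (Matrix.single 0 0 1 - Matrix.single 1 1 1 :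
        Matrix (Fin 2) (Fin 2) ℂ).PosSemidef := by
  refine ⟨?_, ?_, ?_, ?_, ?_⟩
  · rw [phi_eq]
    ext i j
    fin_cases i <;> fin_cases j <;>
      simp [pauli, Matrix.mul_apply, Fin.sum_univ_succ, Matrix.one_apply]
  · intro A hA
    rw [phi_eq]
    have h1 : (pauli 0)ᴴ = pauli 0 := by
      ext i j; fin_cases i <;> fin_cases j <;> simp [pauli]
    have := hA.transpose.mul_mul_conjTranspose_same (pauli 0)
    rwa [h1] at this
  · rw [e01, e00, phi_eq]
    ext i j
    fin_cases i <;> fin_cases j <;>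
      simp [pauli, Matrix.mul_apply, Fin.sum_univ_succ,
        Matrix.vecMul, dotProduct, Matrix.vecHead, Matrix.vecTail]
  · rw [e01, e11, phi_eq, phi_eq]
    ext i j
    fin_cases i <;> fin_cases j <;>
      simp [pauli, Matrix.mul_apply, Fin.sum_univ_succ,
        Matrix.vecMul, dotProduct, Matrix.vecHead, Matrix.vecTail]
  · rw [e00, e11]
    intro h
    have := h.dotProduct_mulVec_nonneg ![0, 1]
    simp [Matrix.mulVec, dotProduct, Fin.sum_univ_succ] at this
    exact absurd this (by norm_num)
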